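/- arXiv:1309.5798 — 4 statements merged into one kernel-verified Lean document; each statement's English description precedes it below -/
import Mathlib

section
/- For every real x > 1, ∑_{n ≤ x} 1/φ(n) < C₂ (1 + log x), where C₂ = ∏_p (1 + 1/(p(p−1))) (product over all primes p). -/
open Finset ArithmeticFunction
open scoped ArithmeticFunction.Moebius ArithmeticFunction.zeta

/-- For squarefree `n`, `n ≤ 2 φ(n)²`. -/
lemma sf_le {n : ℕ} (hn : Squarefree n) : n ≤ 2 * n.totient ^ 2 := by
  have h0 : n ≠ 0 := hn.ne_zero
  have hprod : ∏ p ∈ n.primeFactors, p = n := Nat.prod_primeFactors_of_squarefree hn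
  have htot : n.totient = ∏ p ∈ n.primeFactors, (p - 1) := by
    rw [Nat.totient_eq_prod_factorization h0, Finsupp.prod, Nat.support_factorization]
    refine Finset.prod_congr rfl fun p hp => ?_
    have h1 : n.factorization p = 1 := by
      have hle := hn.natFactorization_le_one p
      have hne : n.factorization p ≠ 0 := by
        rwa [← Finsupp.mem_support_iff, Nat.support_factorization]
      omega
    rw [h1]; simp
  have key : ∏ p ∈ n.primeFactors, p ≤ 2 * ∏ p ∈ n.primeFactors, (p - 1) ^ 2 := by
    have hptri : ∀ p ∈ n.primeFactors, p ≠ 2 → p ≤ (p - 1) ^ 2 := by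
      intro p hp hp2
      have hpp := Nat.prime_of_mem_primeFactors hp
      have : 3 ≤ p := by have := hpp.two_le; omega
      obtain ⟨q, rfl⟩ : ∃ q, p = q + 3 := ⟨p - 3, by omega⟩
      have : q + 3 - 1 = q + 2 := by omega
      rw [this]; nlinarith
    by_cases h2 : 2 ∈ n.primeFactors
    · rw [← Finset.mul_prod_erase _ _ h2, ← Finset.mul_prod_erase _ (fun p => (p - 1) ^ 2) h2]
      have : (2 - 1) ^ 2 = 1 := by norm_num
      rw [this, one_mul]
      refine Nat.mul_le_mul_left 2 ?_
      refine Finset.prod_le_prod' fun p hp => ?_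
      exact hptri p (Finset.mem_of_mem_erase hp) (Finset.ne_of_mem_erase hp)
    · have : ∏ p ∈ n.primeFactors, p ≤ ∏ p ∈ n.primeFactors, (p - 1) ^ 2 :=
        Finset.prod_le_prod' fun p hp => hptri p hp (fun h => h2 (h ▸ hp))
      omega
  calc n = ∏ p ∈ n.primeFactors, p := hprod.symm
    _ ≤ 2 * ∏ p ∈ n.primeFactors, (p - 1) ^ 2 := key
    _ = 2 * n.totient ^ 2 := by rw [htot, ← Finset.prod_pow]


/-- The constant `C₂ = ∏_p (1 + 1/(p(p-1)))`, product over all primes. -/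
noncomputable def C₂ : ℝ := ∏' p : Nat.Primes, (1 + 1 / ((p : ℝ) * ((p : ℝ) - 1)))

/-- The summand `μ(d)²/(d·φ(d))`. -/
noncomputable def ff (d : ℕ) : ℝ := (μ d : ℝ) ^ 2 / (d * (Nat.totient d : ℝ))

lemma ff_nonneg (d : ℕ) : 0 ≤ ff d := by
  unfold ff; positivity

lemma ff_one : ff 1 = 1 := by simp [ff]

lemma ff_mul {m n : ℕ} (h : Nat.Coprime m n) : ff (m * n) = ff m * ff n := by
  unfold ff
  rw [isMultiplicative_moebius.map_mul_of_coprime h, Nat.totient_mul h]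
  push_cast
  rw [mul_pow]
  rw [div_mul_div_comm]
  congr 1
  ring

lemma ff_of_squarefree {d : ℕ} (hd : Squarefree d) :
    ff d = 1 / (d * (Nat.totient d : ℝ)) := by
  unfold ff
  rw [show ((μ d : ℝ)) ^ 2 = ((μ d ^ 2 : ℤ) : ℝ) by push_cast; ring,
    moebius_sq_eq_one_of_squarefree hd]
  norm_num

lemma ff_le (d : ℕ) : ff d ≤ Real.sqrt 2 * ((d : ℝ) ^ ((3 : ℝ) / 2))⁻¹ := by
  rcases eq_or_ne d 0 with rfl | hd0
  · simp [ff]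
  by_cases hd : Squarefree d
  · have hd1 : 1 ≤ d := Nat.one_le_iff_ne_zero.mpr hd0
    have htpos : 0 < (Nat.totient d : ℝ) := by
      exact_mod_cast Nat.totient_pos.mpr (Nat.pos_of_ne_zero hd0)
    have hdpos : 0 < (d : ℝ) := by exact_mod_cast Nat.pos_of_ne_zero hd0
    rw [ff_of_squarefree hd]
    have hrw : ((d : ℝ) ^ ((3 : ℝ) / 2)) = Real.sqrt ((d : ℝ) ^ 3) := by
      rw [Real.sqrt_eq_rpow, ← Real.rpow_natCast (d : ℝ) 3, ← Real.rpow_mul hdpos.le]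
      norm_num
    have hkey : (d : ℝ) ^ 3 ≤ 2 * ((d : ℝ) * (Nat.totient d : ℝ)) ^ 2 := by
      have h1 : (d : ℕ) ≤ 2 * d.totient ^ 2 := sf_le hd
      have h1' : (d : ℝ) ≤ 2 * (Nat.totient d : ℝ) ^ 2 := by exact_mod_cast h1
      nlinarith [sq_nonneg ((d : ℝ)), hdpos]
    have hsq : Real.sqrt ((d : ℝ) ^ 3) ≤ Real.sqrt 2 * ((d : ℝ) * (Nat.totient d : ℝ)) := by
      calc Real.sqrt ((d : ℝ) ^ 3) ≤ Real.sqrt (2 * ((d : ℝ) * (Nat.totient d : ℝ)) ^ 2) :=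
            Real.sqrt_le_sqrt hkey
        _ = Real.sqrt 2 * ((d : ℝ) * (Nat.totient d : ℝ)) := by
            rw [Real.sqrt_mul (by norm_num), Real.sqrt_sq (by positivity)]
    rw [hrw, ← div_eq_mul_inv]
    rw [div_le_div_iff₀ (by positivity) (by positivity)]
    rw [one_mul]
    exact hsq
  · rw [show ff d = 0 by unfold ff; rw [moebius_eq_zero_of_not_squarefree hd]; norm_num]
    positivity
lemma ff_summable : Summable ff := by
  refine Summable.of_nonneg_of_le ff_nonneg ff_le ?_
  have h : Summable (fun n : ℕ => 1 / (n : ℝ) ^ ((3 : ℝ) / 2)) :=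
    Real.summable_one_div_nat_rpow.mpr (by norm_num)
  simpa [one_div] using h.mul_left (Real.sqrt 2)

lemma ff_prime {p : ℕ} (hp : p.Prime) : ff p = 1 / ((p : ℝ) * ((p : ℝ) - 1)) := by
  unfold ff
  rw [moebius_apply_prime hp, Nat.totient_prime hp, Nat.cast_sub hp.one_le]
  norm_num

lemma ff_factor {p : ℕ} (hp : p.Prime) :
    ∑' e : ℕ, ff (p ^ e) = 1 + 1 / ((p : ℝ) * ((p : ℝ) - 1)) := by
  have hz : ∀ e ∉ ({0, 1} : Finset ℕ), ff (p ^ e) = 0 := by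
    intro e he
    simp only [Finset.mem_insert, Finset.mem_singleton] at he
    push_neg at he
    have hnsq : ¬ Squarefree (p ^ e) := by
      rw [Nat.squarefree_pow_iff hp.ne_one he.1]
      tauto
    unfold ff
    rw [moebius_eq_zero_of_not_squarefree hnsq]
    norm_num
  rw [tsum_eq_sum hz, Finset.sum_pair (by norm_num : (0 : ℕ) ≠ 1), pow_zero, pow_one,
    ff_one, ff_prime hp]

lemma ff_tsum : ∑' n, ff n = C₂ := by
  rw [← EulerProduct.eulerProduct_tprod ff_one (fun {m n} h => ff_mul h)
      (by simpa [Real.norm_eq_abs, abs_of_nonneg (ff_nonneg _)] using ff_summable)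
      (by unfold ff; norm_num), C₂]
  exact tprod_congr fun p => ff_factor p.prop
/-- `μ(d)²/φ(d)` as an arithmetic function. -/
noncomputable def gg : ArithmeticFunction ℝ :=
  ⟨fun d => (μ d : ℝ) ^ 2 / (Nat.totient d : ℝ), by simp⟩

lemma gg_apply (d : ℕ) : gg d = (μ d : ℝ) ^ 2 / (Nat.totient d : ℝ) := rfl

lemma gg_mult : gg.IsMultiplicative := by
  refine ⟨by simp [gg_apply], fun {m n} h => ?_⟩
  simp only [gg_apply]
  rw [isMultiplicative_moebius.map_mul_of_coprime h, Nat.totient_mul h]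
  push_cast
  rw [mul_pow, div_mul_div_comm]

/-- `n/φ(n)` as an arithmetic function. -/
noncomputable def hh : ArithmeticFunction ℝ :=
  ⟨fun n => (n : ℝ) / (Nat.totient n : ℝ), by simp⟩

lemma hh_apply (n : ℕ) : hh n = (n : ℝ) / (Nat.totient n : ℝ) := rfl

lemma hh_mult : hh.IsMultiplicative := by
  refine ⟨by simp [hh_apply], fun {m n} h => ?_⟩
  simp only [hh_apply]
  rw [Nat.totient_mul h]
  push_cast
  rw [div_mul_div_comm]

lemma zeta_mul_gg_eq : (↑(ζ : ArithmeticFunction ℕ) * gg) = hh := by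
  rw [ArithmeticFunction.IsMultiplicative.eq_iff_eq_on_prime_powers _ (isMultiplicative_zeta.natCast.mul gg_mult)
    _ hh_mult]
  intro p i hp
  have hp1 : (1 : ℝ) < p := by exact_mod_cast hp.one_lt
  have hpm1 : (p : ℝ) - 1 ≠ 0 := by linarith
  rw [coe_zeta_mul_apply, Nat.sum_divisors_prime_pow hp]
  rcases Nat.eq_zero_or_pos i with rfl | hi
  · simp [gg_apply, hh_apply]
  · rw [hh_apply, Nat.totient_prime_pow hp hi]
    obtain ⟨k, rfl⟩ : ∃ k, i = k + 1 := ⟨i - 1, by omega⟩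
    have hsum : ∑ j ∈ Finset.range (k + 2), gg (p ^ j) = 1 + 1 / ((p : ℝ) - 1) := by
      rw [Finset.sum_range_succ']
      have h0 : gg (p ^ 0) = 1 := by simp [gg_apply]
      rw [h0, Finset.sum_range_succ']
      have h1 : gg (p ^ (0 + 1)) = 1 / ((p : ℝ) - 1) := by
        rw [zero_add, pow_one, gg_apply, moebius_apply_prime hp, Nat.totient_prime hp,
          Nat.cast_sub hp.one_le]
        norm_num
      have h2 : ∑ j ∈ Finset.range k, gg (p ^ (j + 1 + 1)) = 0 := by
        refine Finset.sum_eq_zero fun j hj => ?_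
        have hnsq : ¬ Squarefree (p ^ (j + 1 + 1)) := by
          rw [Nat.squarefree_pow_iff hp.ne_one (by omega)]
          rintro ⟨-, h⟩; omega
        rw [gg_apply, moebius_eq_zero_of_not_squarefree hnsq]
        norm_num
      rw [h1, h2]
      ring
    rw [hsum]
    have hppow : ((p : ℝ) ^ k) ≠ 0 := by positivity
    push_cast [Nat.cast_sub hp.one_le]
    field_simp
    ring
lemma per_n {n : ℕ} (hn : 0 < n) :
    (1 : ℝ) / (Nat.totient n : ℝ) =
      ∑ q ∈ n.divisorsAntidiagonal, gg q.1 / ((q.1 : ℝ) * (q.2 : ℝ)) := by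
  have hdiv : (n : ℝ) / (Nat.totient n : ℝ) = ∑ d ∈ n.divisors, gg d := by
    rw [← hh_apply, ← zeta_mul_gg_eq, coe_zeta_mul_apply]
  have h2 : ∑ q ∈ n.divisorsAntidiagonal, gg q.1 / ((q.1 : ℝ) * (q.2 : ℝ)) =
      ∑ d ∈ n.divisors, gg d / ((d : ℝ) * ((n / d : ℕ) : ℝ)) :=
    Nat.sum_divisorsAntidiagonal (fun a b => gg a / ((a : ℝ) * (b : ℝ)))
  rw [h2]
  have h3 : ∀ d ∈ n.divisors, gg d / ((d : ℝ) * ((n / d : ℕ) : ℝ)) = gg d / (n : ℝ) := by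
    intro d hd
    obtain ⟨hdvd, -⟩ := Nat.mem_divisors.mp hd
    congr 1
    rw [← Nat.cast_mul, Nat.mul_div_cancel' hdvd]
  rw [Finset.sum_congr rfl h3, ← Finset.sum_div, ← hdiv]
  have hn0 : (n : ℝ) ≠ 0 := by exact_mod_cast hn.ne'
  rw [div_right_comm, div_self hn0]

lemma swap_sum (N : ℕ) :
    ∑ n ∈ Finset.Icc 1 N, (1 : ℝ) / (Nat.totient n : ℝ) =
      ∑ d ∈ Finset.Icc 1 N, ∑ m ∈ Finset.Icc 1 (N / d), gg d / ((d : ℝ) * (m : ℝ)) := by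
  have h1 : ∑ n ∈ Finset.Icc 1 N, (1 : ℝ) / (Nat.totient n : ℝ) =
      ∑ q ∈ (Finset.Icc 1 N).sigma (fun n => n.divisorsAntidiagonal),
        gg q.2.1 / ((q.2.1 : ℝ) * (q.2.2 : ℝ)) := by
    rw [Finset.sum_sigma]
    refine Finset.sum_congr rfl fun n hn => ?_
    exact per_n (Finset.mem_Icc.mp hn).1
  have h2 : ∑ d ∈ Finset.Icc 1 N, ∑ m ∈ Finset.Icc 1 (N / d), gg d / ((d : ℝ) * (m : ℝ)) =
      ∑ q ∈ (Finset.Icc 1 N).sigma (fun d => Finset.Icc 1 (N / d)),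
        gg q.1 / ((q.1 : ℝ) * (q.2 : ℝ)) := by
    rw [Finset.sum_sigma]
  rw [h1, h2]
  refine Finset.sum_nbij' (fun q => ⟨q.2.1, q.2.2⟩) (fun q => ⟨q.1 * q.2, (q.1, q.2)⟩)
    ?_ ?_ ?_ ?_ ?_
  · rintro ⟨n, a, b⟩ hq
    rw [Finset.mem_sigma] at hq
    obtain ⟨hn, hab⟩ := hq
    dsimp only at hn hab ⊢
    rw [Finset.mem_Icc] at hn
    rw [Nat.mem_divisorsAntidiagonal] at hab
    obtain ⟨habn, hn0⟩ := hab
    have ha0 : 0 < a := Nat.pos_of_ne_zero (by rintro rfl; rw [zero_mul] at habn; omega)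
    have hb0 : 0 < b := Nat.pos_of_ne_zero (by rintro rfl; rw [mul_zero] at habn; omega)
    rw [Finset.mem_sigma, Finset.mem_Icc, Finset.mem_Icc]
    refine ⟨⟨ha0, ?_⟩, hb0, ?_⟩
    · calc a ≤ a * b := Nat.le_mul_of_pos_right a hb0
        _ = n := habn
        _ ≤ N := hn.2
    · rw [Nat.le_div_iff_mul_le ha0, mul_comm, habn]
      exact hn.2
  · rintro ⟨d, m⟩ hq
    rw [Finset.mem_sigma, Finset.mem_Icc, Finset.mem_Icc] at hq
    obtain ⟨⟨hd1, hdN⟩, hm1, hmN⟩ := hq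
    rw [Finset.mem_sigma, Finset.mem_Icc, Nat.mem_divisorsAntidiagonal]
    have hdm : d * m ≤ N := by
      rw [Nat.le_div_iff_mul_le (by omega)] at hmN
      calc d * m = m * d := mul_comm d m
        _ ≤ N := hmN
    exact ⟨⟨Nat.one_le_iff_ne_zero.mpr (by positivity), hdm⟩, rfl, by positivity⟩
  · rintro ⟨n, a, b⟩ hq
    rw [Finset.mem_sigma] at hq
    have := (Nat.mem_divisorsAntidiagonal.mp hq.2).1
    simp only [Sigma.mk.inj_iff, this]
  · rintro ⟨d, m⟩ _; rfl
  · rintro ⟨n, a, b⟩ _; rfl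
/-- For every real `x > 1`, `∑_{n ≤ x} 1/φ(n) < C₂ (1 + log x)`. -/
theorem sum_one_div_totient_lt (x : ℝ) (hx : 1 < x) :
    ∑ n ∈ Finset.Icc 1 ⌊x⌋₊, (1 : ℝ) / (Nat.totient n : ℝ) < C₂ * (1 + Real.log x) := by
  set N := ⌊x⌋₊ with hNdef
  have hN1 : 1 ≤ N := Nat.le_floor (by exact_mod_cast hx.le)
  have hNx : (N : ℝ) ≤ x := Nat.floor_le (by linarith)
  have hlog : 0 < Real.log x := Real.log_pos hx
  rw [swap_sum]
  have step1 : ∀ d ∈ Finset.Icc 1 N,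
      ∑ m ∈ Finset.Icc 1 (N / d), gg d / ((d : ℝ) * (m : ℝ)) ≤ ff d * (1 + Real.log x) := by
    intro d hd
    rw [Finset.mem_Icc] at hd
    obtain ⟨hd1, hdN⟩ := hd
    have hdr : (0 : ℝ) < (d : ℝ) := by exact_mod_cast hd1
    have htd : (0 : ℝ) < (Nat.totient d : ℝ) := by
      exact_mod_cast Nat.totient_pos.mpr (by omega)
    have hinner : ∑ m ∈ Finset.Icc 1 (N / d), gg d / ((d : ℝ) * (m : ℝ)) =
        ff d * ∑ m ∈ Finset.Icc 1 (N / d), ((m : ℝ))⁻¹ := by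
      rw [Finset.mul_sum]
      refine Finset.sum_congr rfl fun m hm => ?_
      have hm1 : 1 ≤ m := (Finset.mem_Icc.mp hm).1
      have hmr : (0 : ℝ) < (m : ℝ) := by exact_mod_cast hm1
      rw [gg_apply]; unfold ff
      simp only [div_eq_mul_inv, mul_inv]
      ring
    rw [hinner]
    have hM1 : 1 ≤ N / d := (Nat.one_le_div_iff (by omega)).mpr hdN
    have hharm : ∑ m ∈ Finset.Icc 1 (N / d), ((m : ℝ))⁻¹ = ((harmonic (N / d) : ℚ) : ℝ) := by
      rw [harmonic_eq_sum_Icc]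
      push_cast
      rfl
    have hlogle : Real.log ((N / d : ℕ) : ℝ) ≤ Real.log x := by
      refine Real.log_le_log (by exact_mod_cast hM1) ?_
      calc ((N / d : ℕ) : ℝ) ≤ (N : ℝ) := by exact_mod_cast Nat.div_le_self N d
        _ ≤ x := hNx
    have hbound : ∑ m ∈ Finset.Icc 1 (N / d), ((m : ℝ))⁻¹ ≤ 1 + Real.log x := by
      rw [hharm]
      calc ((harmonic (N / d) : ℚ) : ℝ) ≤ 1 + Real.log ((N / d : ℕ) : ℝ) :=
            harmonic_le_one_add_log _
        _ ≤ 1 + Real.log x := by linarith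
    exact mul_le_mul_of_nonneg_left hbound (ff_nonneg d)
  calc ∑ d ∈ Finset.Icc 1 N, ∑ m ∈ Finset.Icc 1 (N / d), gg d / ((d : ℝ) * (m : ℝ))
      ≤ ∑ d ∈ Finset.Icc 1 N, ff d * (1 + Real.log x) := Finset.sum_le_sum step1
    _ = (∑ d ∈ Finset.Icc 1 N, ff d) * (1 + Real.log x) := (Finset.sum_mul _ _ _).symm
    _ < C₂ * (1 + Real.log x) := by
        refine mul_lt_mul_of_pos_right ?_ (by linarith)
        obtain ⟨q, hqN, hq⟩ := Nat.exists_infinite_primes (N + 1)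
        have hqnot : q ∉ Finset.Icc 1 N := by
          rw [Finset.mem_Icc]; omega
        have hq2 : (2 : ℝ) ≤ (q : ℝ) := by exact_mod_cast hq.two_le
        have hfq : 0 < ff q := by
          rw [ff_prime hq]
          exact div_pos one_pos (mul_pos (by linarith) (by linarith))
        calc ∑ d ∈ Finset.Icc 1 N, ff d
            < ∑ d ∈ insert q (Finset.Icc 1 N), ff d := by
              rw [Finset.sum_insert hqnot]; linarith
          _ ≤ ∑' n, ff n := Summable.sum_le_tsum _ (fun i _ => ff_nonneg i) ff_summable
          _ = C₂ := ff_tsum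
end

section
/- For every real x > 1, the number of primes not exceeding x satisfies π(x) < 2x/log x. -/
open Finset

private lemma sieve_pi (n : ℕ) (hn : 7 ≤ n) :
    Nat.primeCounting n ≤ 5 + (n - 6) / 3 := by
  have h7 : Nat.primeCounting' 7 = 3 := by decide
  have hφ : Nat.totient 6 = 2 := by decide
  have key := Nat.primeCounting'_add_le (a := 6) (k := 7) (by norm_num) (by norm_num) (n - 6)
  have hn1 : n + 1 = 7 + (n - 6) := by omega
  have h1 : Nat.primeCounting n = Nat.primeCounting' (7 + (n - 6)) := by
    rw [← hn1]; rfl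
  rw [h1]
  refine key.trans ?_
  rw [h7, hφ]
  -- 3 + 2 * ((n-6)/6 + 1) ≤ 5 + (n-6)/3
  have h2 : 2 * ((n - 6) / 6) ≤ (n - 6) / 3 := by
    have ha : (n - 6) / 6 * 6 ≤ n - 6 := Nat.div_mul_le_self _ 6
    have hb : (n - 6) / 6 * 6 / 3 ≤ (n - 6) / 3 := Nat.div_le_div_right ha
    have hc : (n - 6) / 6 * 6 = 2 * ((n - 6) / 6) * 3 := by ring
    rw [hc, Nat.mul_div_cancel _ (by norm_num)] at hb
    exact hb
  omega

private lemma key_lemma (m r : ℕ) (hm : 1 ≤ m) (hr : r ≤ m) :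
    ∃ k : ℕ, Nat.primeCounting (m + r) ≤ Nat.primeCounting m + k ∧
      (m + 1) ^ k ≤ 2 ^ (m + r) := by
  set S : Finset ℕ := (Finset.Ico (m + 1) (m + r + 1)).filter Nat.Prime with hS
  refine ⟨S.card, ?_, ?_⟩
  · -- counting part
    have hcount : Nat.primeCounting (m + r) = Nat.count Nat.Prime (m + r + 1) := rfl
    have hcountm : Nat.primeCounting m = Nat.count Nat.Prime (m + 1) := rfl
    rw [hcount, hcountm, Nat.count_eq_card_filter_range, Nat.count_eq_card_filter_range]
    have hsplit : Finset.range (m + r + 1) = Finset.range (m + 1) ∪ Finset.Ico (m + 1) (m + r + 1) := by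
      rw [Finset.range_eq_Ico, Finset.range_eq_Ico, Finset.Ico_union_Ico_eq_Ico (Nat.zero_le _) (by omega)]
    rw [hsplit, Finset.filter_union]
    exact Finset.card_union_le _ _
  · -- product part
    have hmem : ∀ p ∈ S, m + 1 ≤ p := fun p hp =>
      (Finset.mem_Ico.1 (Finset.mem_filter.1 hp).1).1
    have h1 : (m + 1) ^ S.card ≤ ∏ p ∈ S, p :=
      Finset.pow_card_le_prod S id (m + 1) hmem
    have h2 : (∏ p ∈ S, p) ∣ Nat.choose (m + r) m := by
      refine Finset.prod_primes_dvd _ (fun p hp => (Finset.mem_filter.1 hp).2.prime) ?_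
      intro p hp
      obtain ⟨hpIco, hpP⟩ := Finset.mem_filter.1 hp
      obtain ⟨hp1, hp2⟩ := Finset.mem_Ico.1 hpIco
      exact hpP.dvd_choose_add (by omega) (by omega) (by omega)
    have h3 : Nat.choose (m + r) m ≤ 2 ^ (m + r) := by
      calc Nat.choose (m + r) m
          ≤ ∑ i ∈ Finset.range (m + r + 1), (m + r).choose i :=
            Finset.single_le_sum (f := fun i => (m + r).choose i)
              (fun i _ => Nat.zero_le _) (Finset.mem_range.2 (by omega))
        _ = 2 ^ (m + r) := Nat.sum_range_choose _
    have h4 : 0 < Nat.choose (m + r) m := Nat.choose_pos (Nat.le_add_right m r)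
    exact h1.trans ((Nat.le_of_dvd h4 h2).trans h3)

private lemma log_le_aux {n b : ℕ} (k : ℕ) (hn : 0 < n) (hnb : n ≤ b) :
    Real.log n ≤ k * Real.log 2 + ((b : ℝ) / 2 ^ k - 1) := by
  have hb : (0 : ℝ) < b := by exact_mod_cast hn.trans_le hnb
  have h1 : Real.log n ≤ Real.log b :=
    Real.log_le_log (by exact_mod_cast hn) (by exact_mod_cast hnb)
  have h2 : Real.log ((b : ℝ) / 2 ^ k) = Real.log b - Real.log ((2 : ℝ) ^ k) :=
    Real.log_div (ne_of_gt hb) (by positivity)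
  have h3 : Real.log ((b : ℝ) / 2 ^ k) ≤ (b : ℝ) / 2 ^ k - 1 :=
    Real.log_le_sub_one_of_pos (by positivity)
  have h4 : Real.log ((2 : ℝ) ^ k) = k * Real.log 2 := Real.log_pow 2 k
  linarith

private lemma base_helper (n P a : ℕ) {U : ℝ} (hP : Nat.primeCounting n ≤ P)
    (hU : Real.log n ≤ U) (ha : a ≤ n) (hn : 1 ≤ n) (hnum : (P : ℝ) * U < 2 * a) :
    (Nat.primeCounting n : ℝ) * Real.log n < 2 * n := by
  have h0 : (0 : ℝ) ≤ Real.log n := Real.log_nonneg (by exact_mod_cast hn)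
  have hπ : (Nat.primeCounting n : ℝ) ≤ P := by exact_mod_cast hP
  have h1 : (Nat.primeCounting n : ℝ) * Real.log n ≤ (P : ℝ) * U :=
    mul_le_mul hπ hU h0 (by positivity)
  have haa : (a : ℝ) ≤ n := by exact_mod_cast ha
  linarith

private lemma base_iv {n : ℕ} (a b P k : ℕ)
    (ha : a ≤ n) (hb : n ≤ b) (h7 : 7 ≤ n)
    (hPd : 5 + (b - 6) / 3 ≤ P)
    (hnum : (P : ℝ) * (k * Real.log 2 + ((b : ℝ) / 2 ^ k - 1)) < 2 * a) :
    (Nat.primeCounting n : ℝ) * Real.log n < 2 * n := by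
  have hP : Nat.primeCounting n ≤ P := by
    refine (sieve_pi n h7).trans ?_
    have : (n - 6) / 3 ≤ (b - 6) / 3 := Nat.div_le_div_right (by omega)
    omega
  exact base_helper n P a hP (log_le_aux k (by omega) hb) ha (by omega) hnum

private lemma main_nat (n : ℕ) (hn2 : 2 ≤ n) :
    (Nat.primeCounting n : ℝ) * Real.log n < 2 * n := by
  induction n using Nat.strong_induction_on with
  | _ n IH =>
  by_cases hbig : 128 ≤ n
  · -- inductive step
    set m : ℕ := (n + 1) / 2 with hm_def
    have hm7 : 7 ≤ m := by omega
    have hmlt : m < n := by omega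
    have hm2 : 2 ≤ m := by omega
    have hn2m : n ≤ 2 * m := by omega
    have h2mn : 2 * m ≤ n + 1 := by omega
    obtain ⟨k, hcount, hpow⟩ := key_lemma m (n - m) (by omega) (by omega)
    have hmr : m + (n - m) = n := by omega
    rw [hmr] at hcount hpow
    have hm0 : (0 : ℝ) < m := by positivity
    have hn0 : (0 : ℝ) < n := by positivity
    -- real facts
    have f2 : (Nat.primeCounting n : ℝ) ≤ (Nat.primeCounting m : ℝ) + k := by
      exact_mod_cast hcount
    have f3 : (k : ℝ) * Real.log ((m : ℝ) + 1) ≤ (n : ℝ) * Real.log 2 := by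
      have hc : ((m : ℝ) + 1) ^ k ≤ (2 : ℝ) ^ n := by exact_mod_cast hpow
      have := Real.log_le_log (by positivity) hc
      rw [Real.log_pow, Real.log_pow] at this
      push_cast at this ⊢
      linarith
    have f1 : Real.log n ≤ Real.log ((m : ℝ) + 1) + Real.log 2 := by
      have hcast : (n : ℝ) ≤ 2 * ((m : ℝ) + 1) := by
        have : (n : ℝ) ≤ 2 * (m : ℝ) := by exact_mod_cast hn2m
        linarith
      have h := Real.log_le_log hn0 hcast
      rw [Real.log_mul two_ne_zero (by positivity)] at h
      linarith
    have f4 : Real.log ((m : ℝ) + 1) ≤ Real.log m + 1 / m := by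
      have hpos : (0 : ℝ) < ((m : ℝ) + 1) / m := by positivity
      have h1 := Real.log_le_sub_one_of_pos hpos
      have h2 : Real.log (((m : ℝ) + 1) / m) = Real.log ((m : ℝ) + 1) - Real.log m :=
        Real.log_div (by positivity) (ne_of_gt hm0)
      have h3 : ((m : ℝ) + 1) / m - 1 = 1 / m := by field_simp; ring
      linarith
    have f5 : (Nat.primeCounting m : ℝ) * Real.log m < 2 * m := IH m hmlt hm2
    have f6 : (Nat.primeCounting n : ℝ) ≤ 5 + (n : ℝ) / 3 := by
      have hs := sieve_pi n (by omega)
      have hc1 : (Nat.primeCounting n : ℝ) ≤ 5 + ((((n - 6) / 3 : ℕ)) : ℝ) := by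
        exact_mod_cast hs
      have hc2 : ((((n - 6) / 3 : ℕ)) : ℝ) ≤ ((n - 6 : ℕ) : ℝ) / 3 := by
        exact_mod_cast Nat.cast_div_le (m := n - 6) (n := 3) (α := ℝ)
      have hc3 : ((n - 6 : ℕ) : ℝ) ≤ (n : ℝ) := by exact_mod_cast Nat.sub_le n 6
      linarith
    have f7 : (Nat.primeCounting m : ℝ) ≤ (m : ℝ) := by
      have := sieve_pi m hm7
      have h : Nat.primeCounting m ≤ m := by omega
      exact_mod_cast h
    have hP2 : (0 : ℝ) ≤ (Nat.primeCounting n : ℝ) := by positivity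
    have hP1 : (0 : ℝ) ≤ (Nat.primeCounting m : ℝ) := by positivity
    have hLm1 : (0 : ℝ) ≤ Real.log ((m : ℝ) + 1) := Real.log_nonneg (by linarith)
    have hL2 : (0 : ℝ) ≤ Real.log 2 := Real.log_nonneg (by norm_num)
    have hl2d := Real.log_two_lt_d9
    -- chain
    have g1 := mul_le_mul_of_nonneg_left f1 hP2
    have g2 := mul_le_mul_of_nonneg_right f2 hLm1
    have g3 := mul_le_mul_of_nonneg_left f4 hP1
    have g4 : (Nat.primeCounting m : ℝ) * (1 / m) ≤ (m : ℝ) * (1 / m) :=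
      mul_le_mul_of_nonneg_right f7 (by positivity)
    have g5 : (m : ℝ) * (1 / m) = 1 := by field_simp
    have h6 : (Nat.primeCounting n : ℝ) * Real.log 2 ≤ (5 + (n : ℝ) / 3) * Real.log 2 :=
      mul_le_mul_of_nonneg_right f6 hL2
    have h7 : (5 + (n : ℝ) / 3 + n) * Real.log 2 ≤
        (5 + (n : ℝ) / 3 + n) * 0.6931471808 :=
      mul_le_mul_of_nonneg_left hl2d.le (by positivity)
    have hn128 : (128 : ℝ) ≤ n := by exact_mod_cast hbig
    have h2m : (2 : ℝ) * m ≤ (n : ℝ) + 1 := by exact_mod_cast h2mn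
    linarith [g1, g2, g3, g4, g5, h6, h7, f3, f5]
  · -- base case: 2 ≤ n ≤ 127
    push_neg at hbig
    by_cases h7 : n < 7
    · -- n from 2 to 6
      by_cases h2 : n = 2
      · subst h2
        exact base_helper 2 1 2 (by decide) (log_le_aux 1 (by norm_num) le_rfl)
          le_rfl (by norm_num)
          (by have := Real.log_two_lt_d9; norm_num; linarith)
      · have h36 : 3 ≤ n ∧ n ≤ 6 := by omega
        have hP : Nat.primeCounting n ≤ 3 := by
          have hmono := Nat.monotone_primeCounting (show n ≤ 6 by omega)
          have h6 : Nat.primeCounting 6 = 3 := by decide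
          omega
        exact base_helper n 3 3 hP (log_le_aux 2 (by omega) h36.2) h36.1 (by omega)
          (by have := Real.log_two_lt_d9; norm_num; linarith)
    · push_neg at h7
      rcases le_or_gt n 9 with h | h
      · exact base_iv 7 9 6 3 h7 h h7 (by norm_num)
          (by have := Real.log_two_lt_d9; norm_num; linarith)
      rcases le_or_gt n 13 with h' | h'
      · exact base_iv 10 13 7 3 (by omega) h' (by omega) (by norm_num)
          (by have := Real.log_two_lt_d9; norm_num; linarith)
      rcases le_or_gt n 20 with h2 | h2
      · exact base_iv 14 20 9 4 (by omega) h2 (by omega) (by norm_num)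
          (by have := Real.log_two_lt_d9; norm_num; linarith)
      rcases le_or_gt n 26 with h3 | h3
      · exact base_iv 21 26 11 4 (by omega) h3 (by omega) (by norm_num)
          (by have := Real.log_two_lt_d9; norm_num; linarith)
      rcases le_or_gt n 35 with h4 | h4
      · exact base_iv 27 35 14 5 (by omega) h4 (by omega) (by norm_num)
          (by have := Real.log_two_lt_d9; norm_num; linarith)
      rcases le_or_gt n 47 with h5 | h5
      · exact base_iv 36 47 18 5 (by omega) h5 (by omega) (by norm_num)
          (by have := Real.log_two_lt_d9; norm_num; linarith)
      rcases le_or_gt n 59 with h6 | h6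
      · exact base_iv 48 59 22 5 (by omega) h6 (by omega) (by norm_num)
          (by have := Real.log_two_lt_d9; norm_num; linarith)
      rcases le_or_gt n 74 with h8 | h8
      · exact base_iv 60 74 27 6 (by omega) h8 (by omega) (by norm_num)
          (by have := Real.log_two_lt_d9; norm_num; linarith)
      rcases le_or_gt n 89 with h9 | h9
      · exact base_iv 75 89 32 6 (by omega) h9 (by omega) (by norm_num)
          (by have := Real.log_two_lt_d9; norm_num; linarith)
      rcases le_or_gt n 104 with h10 | h10
      · exact base_iv 90 104 37 6 (by omega) h10 (by omega) (by norm_num)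
          (by have := Real.log_two_lt_d9; norm_num; linarith)
      rcases le_or_gt n 116 with h11 | h11
      · exact base_iv 105 116 41 6 (by omega) h11 (by omega) (by norm_num)
          (by have := Real.log_two_lt_d9; norm_num; linarith)
      · exact base_iv 117 127 45 6 (by omega) (by omega) (by omega) (by norm_num)
          (by have := Real.log_two_lt_d9; norm_num; linarith)

/-- For every real `x > 1`, the number of primes not exceeding `x` satisfies
`π(x) < 2x / log x`. -/
theorem primeCounting_lt_two_mul_div_log (x : ℝ) (hx : 1 < x) :
    (Nat.primeCounting ⌊x⌋₊ : ℝ) < 2 * x / Real.log x := by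
  have hx0 : (0 : ℝ) < x := by linarith
  have hlogx : 0 < Real.log x := Real.log_pos hx
  rw [lt_div_iff₀ hlogx]
  set n : ℕ := ⌊x⌋₊ with hn_def
  by_cases hn1 : n ≤ 1
  · have h0 : Nat.primeCounting n = 0 := Nat.primeCounting_eq_zero_iff.mpr hn1
    rw [h0]
    push_cast
    rw [zero_mul]
    positivity
  · push_neg at hn1
    have hn2 : 2 ≤ n := hn1
    have hnx : (n : ℝ) ≤ x := Nat.floor_le (le_of_lt hx0)
    have hn0 : (0 : ℝ) < n := by exact_mod_cast Nat.lt_of_lt_of_le Nat.zero_lt_two hn2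
    have hmain := main_nat n hn2
    -- log x ≤ log n + (x - n)/n
    have hlog : Real.log x ≤ Real.log n + (x - n) / n := by
      have hpos : (0 : ℝ) < x / n := by positivity
      have h1 := Real.log_le_sub_one_of_pos hpos
      have h2 : Real.log (x / n) = Real.log x - Real.log n :=
        Real.log_div (ne_of_gt hx0) (ne_of_gt hn0)
      have h3 : x / n - 1 = (x - n) / n := by field_simp
      linarith
    have hπn : (Nat.primeCounting n : ℝ) ≤ 2 * n := by
      have h1 : Nat.primeCounting n = Nat.count Nat.Prime (n + 1) := rfl
      have h2 : Nat.count Nat.Prime (n + 1) ≤ n + 1 := Nat.count_le _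
      have h3 : Nat.primeCounting n ≤ 2 * n := by omega
      exact_mod_cast h3
    have hxn : 0 ≤ x - (n : ℝ) := by linarith
    have hkey : (Nat.primeCounting n : ℝ) * Real.log x ≤
        (Nat.primeCounting n : ℝ) * Real.log n +
        (Nat.primeCounting n : ℝ) * ((x - n) / n) := by
      have hP : (0 : ℝ) ≤ (Nat.primeCounting n : ℝ) := by positivity
      nlinarith [mul_le_mul_of_nonneg_left hlog hP]
    have hterm : (Nat.primeCounting n : ℝ) * ((x - n) / n) ≤ 2 * (x - n) := by
      have : (Nat.primeCounting n : ℝ) * ((x - n) / n) ≤ (2 * n) * ((x - n) / n) :=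
        mul_le_mul_of_nonneg_right hπn (by positivity)
      have he : (2 * (n : ℝ)) * ((x - n) / n) = 2 * (x - n) := by field_simp
      linarith
    linarith
end

section
/- For every real x ≥ 1, the number Q(x) of squarefree integers n with 1 ≤ n ≤ x satisfies |Q(x) − x/ζ(2)| ≤ 2√x. -/
open Finset ArithmeticFunction
open scoped ArithmeticFunction.Moebius


lemma sq_dvd_iff' {a b : ℕ} (ha : a ≠ 0) (hb : b ≠ 0) (hS : Squarefree a) (d : ℕ) :
    d ^ 2 ∣ b ^ 2 * a ↔ d ∣ b := by
  constructor
  · intro h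
    have hd : d ≠ 0 := by
      rintro rfl
      rw [pow_two, Nat.zero_mul, Nat.zero_dvd, Nat.mul_eq_zero] at h
      rcases h with h | h
      · exact hb (pow_eq_zero_iff two_ne_zero |>.mp h)
      · exact ha h
    rw [← Nat.factorization_le_iff_dvd hd hb]
    intro p
    have h2 := (Nat.factorization_le_iff_dvd (pow_ne_zero 2 hd)
      (by positivity)).mpr h p
    rw [Nat.factorization_mul (pow_ne_zero 2 hb) ha, Nat.factorization_pow,
      Nat.factorization_pow] at h2
    have ha1 : a.factorization p ≤ 1 := hS.natFactorization_le_one p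
    simp only [Finsupp.coe_add, Finsupp.coe_smul, Pi.add_apply, Pi.smul_apply,
      smul_eq_mul] at h2
    omega
  · intro h
    exact Dvd.dvd.mul_right (pow_dvd_pow_of_dvd h 2) a

lemma sqfree_inner_sum (N : ℕ) {n : ℕ} (hn1 : 1 ≤ n) (hnN : n ≤ N) :
    (∑ d ∈ (Icc 1 (Nat.sqrt N)).filter (fun d => d ^ 2 ∣ n), (μ d : ℤ)) =
      if Squarefree n then 1 else 0 := by
  obtain ⟨a, b, ha, hb, hab, hsa⟩ := Nat.sq_mul_squarefree_of_pos (by omega : 0 < n)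
  have hfil : (Icc 1 (Nat.sqrt N)).filter (fun d => d ^ 2 ∣ n) = b.divisors := by
    ext d
    simp only [mem_filter, mem_Icc, Nat.mem_divisors]
    constructor
    · rintro ⟨⟨-, -⟩, hd⟩
      rw [← hab, sq_dvd_iff' ha.ne' hb.ne' hsa] at hd
      exact ⟨hd, hb.ne'⟩
    · rintro ⟨hd, -⟩
      have hd2 : d ^ 2 ∣ n := by rw [← hab, sq_dvd_iff' ha.ne' hb.ne' hsa]; exact hd
      have hdb : d ≤ b := Nat.le_of_dvd hb hd
      have hbs : b ≤ Nat.sqrt N := by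
        rw [Nat.le_sqrt]
        calc b * b = b ^ 2 := (sq b).symm
        _ ≤ n := Nat.le_of_dvd (by omega) ⟨a, hab.symm⟩
        _ ≤ N := hnN
      refine ⟨⟨Nat.one_le_iff_ne_zero.mpr ?_, le_trans hdb hbs⟩, hd2⟩
      rintro rfl
      simp at hd
      omega
  rw [hfil]
  have key : (∑ d ∈ b.divisors, (μ d : ℤ)) = if b = 1 then 1 else 0 := by
    have h := congrArg (fun f : ArithmeticFunction ℤ => f b) moebius_mul_coe_zeta
    simp only [coe_mul_zeta_apply, one_apply] at h
    exact h
  rw [key]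
  by_cases hb1 : b = 1
  · subst hb1
    rw [if_pos rfl, if_pos]
    rwa [← hab, one_pow, one_mul]
  · rw [if_neg hb1, if_neg]
    intro hsf
    have : b ^ 2 ∣ n := ⟨a, hab.symm⟩
    have := (Nat.squarefree_iff_prime_squarefree.mp hsf)
    obtain ⟨p, hp, hpb⟩ := Nat.exists_prime_and_dvd hb1
    exact this p hp (dvd_trans (mul_dvd_mul hpb hpb) (by rwa [← sq]))

lemma count_squarefree_eq (N : ℕ) :
    (((Icc 1 N).filter Squarefree).card : ℤ) =
      ∑ d ∈ Icc 1 (Nat.sqrt N), (μ d : ℤ) * (N / d ^ 2 : ℕ) := by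
  have h1 : (((Icc 1 N).filter Squarefree).card : ℤ)
      = ∑ n ∈ Icc 1 N, if Squarefree n then (1:ℤ) else 0 := by
    rw [Finset.sum_boole]
  rw [h1,
    Finset.sum_congr rfl (fun n hn => (sqfree_inner_sum N (mem_Icc.mp hn).1
      (mem_Icc.mp hn).2).symm)]
  simp_rw [Finset.sum_filter]
  rw [Finset.sum_comm]
  refine Finset.sum_congr rfl fun d hd => ?_
  have hIoc : Icc 1 N = Ioc 0 N := by ext m; simp; omega
  rw [← Finset.sum_filter, Finset.sum_const, hIoc,
    Nat.Ioc_filter_dvd_card_eq_div N (d ^ 2), nsmul_eq_mul, mul_comm]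


lemma moebius_summable : Summable (fun d : ℕ => ((μ d : ℝ) / (d : ℝ) ^ 2)) := by
  apply Summable.of_norm_bounded (g := fun d : ℕ => 1 / (d : ℝ) ^ 2)
    (Real.summable_one_div_nat_pow.mpr one_lt_two)
  intro d
  rcases Nat.eq_zero_or_pos d with rfl | hd
  · simp
  · rw [Real.norm_eq_abs, abs_div, _root_.abs_of_nonneg (by positivity : (0:ℝ) ≤ (d:ℝ)^2)]
    apply div_le_div_of_nonneg_right ?_ (by positivity)
    calc |(μ d : ℝ)| = ((|μ d| : ℤ) : ℝ) := by push_cast; rfl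
    _ ≤ 1 := by exact_mod_cast abs_moebius_le_one

lemma moebius_hasSum : HasSum (fun d : ℕ => ((μ d : ℝ) / (d : ℝ) ^ 2)) (6 / Real.pi ^ 2) := by
  have hre : (1:ℝ) < (2:ℂ).re := by norm_num
  have hL := LSeries_zeta_mul_Lseries_moebius (s := 2) hre
  rw [LSeries_zeta_eq_riemannZeta hre, riemannZeta_two] at hL
  have hterm : ∀ n : ℕ, LSeries.term (fun n => (μ n : ℂ)) 2 n
      = ((((μ n : ℝ) / (n : ℝ) ^ 2) : ℝ) : ℂ) := by
    intro n
    rcases Nat.eq_zero_or_pos n with rfl | hn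
    · simp [LSeries.term]
    · rw [LSeries.term_of_ne_zero hn.ne']
      push_cast
      rw [Complex.cpow_ofNat]
  have hS := moebius_summable.hasSum
  have hC : HasSum (fun n : ℕ => LSeries.term (fun n => (μ n : ℂ)) 2 n)
      (((∑' d : ℕ, (μ d : ℝ) / (d : ℝ) ^ 2 : ℝ) : ℂ)) := by
    rw [funext hterm]
    exact Complex.hasSum_ofReal.mpr hS
  have hLμ : LSeries (fun n => (μ n : ℂ)) 2
      = ((∑' d : ℕ, (μ d : ℝ) / (d : ℝ) ^ 2 : ℝ) : ℂ) := hC.tsum_eq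
  rw [hLμ] at hL
  have hπ : ((Real.pi : ℂ)) ^ 2 / 6 ≠ 0 := by
    simp [Real.pi_ne_zero, pow_eq_zero_iff]
  have hπ2 : ((Real.pi : ℂ)) ^ 2 ≠ 0 := by
    simp [Real.pi_ne_zero]
  have : ((∑' d : ℕ, (μ d : ℝ) / (d : ℝ) ^ 2 : ℝ) : ℂ) = 6 / (Real.pi : ℂ) ^ 2 := by
    rw [eq_div_iff hπ2]
    field_simp at hL
    linear_combination hL
  have h2 : (∑' d : ℕ, (μ d : ℝ) / (d : ℝ) ^ 2) = 6 / Real.pi ^ 2 := by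
    exact_mod_cast this
  rwa [h2] at hS


lemma inv_sq_tail_le (D : ℕ) :
    ∑' i : ℕ, (1 : ℝ) / ((D : ℝ) + 1 + i) ^ 2 ≤ 1 / ((D : ℝ) + 1 / 2) := by
  set F : ℕ → ℝ := fun i => 1 / ((D : ℝ) + 1 / 2 + i) with hF
  have hpos : ∀ i : ℕ, (0:ℝ) < (D : ℝ) + 1 / 2 + i := fun i => by positivity
  have hbound : ∀ i : ℕ, (1 : ℝ) / ((D : ℝ) + 1 + i) ^ 2 ≤ F i - F (i + 1) := by
    intro i
    have h1 := hpos i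
    have h2 := hpos (i + 1)
    rw [hF]
    push_cast
    rw [div_sub_div _ _ (by linarith) (by linarith)]
    rw [div_le_div_iff₀ (by positivity) (by positivity)]
    ring_nf
    nlinarith [sq_nonneg ((D:ℝ) + 1 + i)]
  apply Summable.tsum_le_of_sum_le
  · apply Summable.of_norm_bounded (g := fun i : ℕ => 1 / ((i:ℝ)+1) ^ 2)
    · exact_mod_cast (summable_nat_add_iff 1).mpr (Real.summable_one_div_nat_pow.mpr one_lt_two)
    · intro i
      rw [Real.norm_eq_abs, abs_of_nonneg (by positivity)]
      have hd0 : (0:ℝ) ≤ (D:ℝ) := Nat.cast_nonneg D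
      exact one_div_le_one_div_of_le (by positivity) (by nlinarith [(Nat.cast_nonneg i : (0:ℝ) ≤ i), mul_nonneg hd0 (Nat.cast_nonneg i : (0:ℝ) ≤ i), sq_nonneg ((D:ℝ))])
  · intro s
    obtain ⟨n, hn⟩ := Finset.exists_nat_subset_range s
    calc ∑ i ∈ s, (1 : ℝ) / ((D : ℝ) + 1 + i) ^ 2
        ≤ ∑ i ∈ Finset.range n, (1 : ℝ) / ((D : ℝ) + 1 + i) ^ 2 :=
          Finset.sum_le_sum_of_subset_of_nonneg hn (fun i _ _ => by positivity)
      _ ≤ ∑ i ∈ Finset.range n, (F i - F (i + 1)) :=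
          Finset.sum_le_sum fun i _ => hbound i
      _ = F 0 - F n := by rw [Finset.sum_range_sub' F]
      _ ≤ F 0 := by
          have h0 := hpos n
          have : 0 < F n := by rw [hF]; positivity
          linarith
      _ = 1 / ((D : ℝ) + 1 / 2) := by simp [hF]

lemma moebius_tail_le (D : ℕ) :
    |6 / Real.pi ^ 2 - ∑ d ∈ Icc 1 D, (μ d : ℝ) / (d : ℝ) ^ 2| ≤ 1 / ((D : ℝ) + 1 / 2) := by
  set g : ℕ → ℝ := fun d => (μ d : ℝ) / (d : ℝ) ^ 2 with hg
  have hsplit := (Summable.sum_add_tsum_nat_add (f := g) (D + 1) moebius_summable).symm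
  have hrange : ∑ i ∈ Finset.range (D + 1), g i = ∑ d ∈ Icc 1 D, g d := by
    have h0 : Finset.range (D + 1) = insert 0 (Icc 1 D) := by
      ext m; simp [Finset.mem_range, Finset.mem_insert]; omega
    rw [h0, Finset.sum_insert (by simp)]
    simp [hg]
  have htsum : 6 / Real.pi ^ 2 = ∑' i, g i := (moebius_hasSum.tsum_eq).symm
  rw [htsum, hsplit, hrange, add_sub_cancel_left]
  have hsummable : Summable (fun i : ℕ => g (i + (D + 1))) :=
    (summable_nat_add_iff (D + 1)).mpr moebius_summable
  have hcomp : Summable (fun i : ℕ => (1:ℝ) / ((D:ℝ) + 1 + i) ^ 2) := by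
    have h := (summable_nat_add_iff (f := fun n : ℕ => (1:ℝ) / (n:ℝ) ^ 2) (D + 1)).mpr
      (Real.summable_one_div_nat_pow.mpr one_lt_two)
    exact h.congr fun i => by push_cast; ring_nf
  calc |∑' i, g (i + (D + 1))| ≤ ∑' i, |g (i + (D + 1))| := by
        simpa [Real.norm_eq_abs] using
          norm_tsum_le_tsum_norm (f := fun i => g (i + (D + 1)))
            (by simpa [Real.norm_eq_abs] using hsummable.abs)
    _ ≤ ∑' i : ℕ, (1 : ℝ) / ((D : ℝ) + 1 + i) ^ 2 := by
        apply Summable.tsum_le_tsum _ hsummable.abs hcomp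
        intro i
        rw [hg]
        simp only []
        rw [abs_div, abs_of_nonneg (by positivity : (0:ℝ) ≤ ((i + (D+1) : ℕ) : ℝ) ^ 2)]
        have hpos : (0:ℝ) < ((i + (D+1) : ℕ) : ℝ) ^ 2 := by positivity
        have h1 : |((μ (i + (D+1)) : ℤ) : ℝ)| ≤ 1 := by
          exact_mod_cast (abs_moebius_le_one (n := i + (D+1)))
        have heq : ((i + (D+1) : ℕ) : ℝ) = (D : ℝ) + 1 + i := by push_cast; ring
        rw [heq] at hpos ⊢
        exact div_le_div_of_nonneg_right h1 hpos.le
    _ ≤ 1 / ((D : ℝ) + 1 / 2) := inv_sq_tail_le D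


/-- For every real `x ≥ 1`, the number `Q(x)` of squarefree integers `1 ≤ n ≤ x`
satisfies `|Q(x) - x/ζ(2)| ≤ 2√x`, where `ζ(2) = π²/6`. -/
theorem squarefree_count_sub_div_zeta_two_abs_le (x : ℝ) (hx : 1 ≤ x) :
    |(((Finset.Icc 1 ⌊x⌋₊).filter Squarefree).card : ℝ) - x / (Real.pi ^ 2 / 6)| ≤
      2 * Real.sqrt x := by
  have hx0 : (0:ℝ) ≤ x := by linarith
  set N := ⌊x⌋₊ with hN
  have hN1 : 1 ≤ N := Nat.le_floor (by exact_mod_cast hx)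
  set D := Nat.sqrt N with hD
  have hD1 : 1 ≤ D := Nat.sqrt_pos.mpr hN1
  have hNx : (N : ℝ) ≤ x := Nat.floor_le hx0
  have hxN : x < (N : ℝ) + 1 := Nat.lt_floor_add_one x
  set s := Real.sqrt x with hs
  have hs2 : s ^ 2 = x := Real.sq_sqrt hx0
  have hs0 : 0 ≤ s := Real.sqrt_nonneg x
  have hDs : (D : ℝ) ≤ s := by
    rw [hs, show ((D:ℝ)) = Real.sqrt ((D:ℝ)^2) by
      rw [Real.sqrt_sq (by positivity)]]
    apply Real.sqrt_le_sqrt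
    calc ((D:ℝ)^2) = ((D^2 : ℕ) : ℝ) := by push_cast; ring
    _ ≤ (N : ℝ) := by exact_mod_cast Nat.sqrt_le' N
    _ ≤ x := hNx
  have hsD : s < (D : ℝ) + 1 := by
    have h1 : N < (D + 1) ^ 2 := Nat.lt_succ_sqrt' N
    have h2 : x < ((D : ℝ) + 1) ^ 2 := by
      have : (N : ℝ) + 1 ≤ (((D + 1) ^ 2 : ℕ) : ℝ) := by exact_mod_cast h1
      push_cast at this
      linarith
    nlinarith [hs0, Real.sq_sqrt hx0]
  -- the exact value of the count
  have hQ : (((Finset.Icc 1 N).filter Squarefree).card : ℝ) =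
      ∑ d ∈ Finset.Icc 1 D, (μ d : ℝ) * ((N / d ^ 2 : ℕ) : ℝ) := by
    have h := congrArg (fun z : ℤ => (z : ℝ)) (count_squarefree_eq N)
    push_cast at h
    exact h
  -- floor identification
  have hfloor : ∀ d : ℕ, 1 ≤ d → ((N / d ^ 2 : ℕ) : ℝ) = (⌊x / ((d:ℝ)) ^ 2⌋₊ : ℝ) := by
    intro d _
    congr 1
    rw [hN]
    rw [← Nat.floor_div_natCast x (d ^ 2)]
    congr 1
    push_cast
    ring
  -- per-term error bound
  have hterm : ∀ d ∈ Finset.Icc 1 D,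
      |(μ d : ℝ) * (((N / d ^ 2 : ℕ) : ℝ) - x / (d : ℝ) ^ 2)| ≤ 1 := by
    intro d hd
    have hd1 : 1 ≤ d := (Finset.mem_Icc.mp hd).1
    have hdpos : (0:ℝ) < (d:ℝ) ^ 2 := by positivity
    have hy0 : (0:ℝ) ≤ x / (d:ℝ) ^ 2 := by positivity
    rw [abs_mul]
    have h1 : |(μ d : ℝ)| ≤ 1 := by
      calc |((μ d : ℤ) : ℝ)| = ((|μ d| : ℤ) : ℝ) := by push_cast; rfl
      _ ≤ 1 := by exact_mod_cast abs_moebius_le_one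
    have h2 : |((N / d ^ 2 : ℕ) : ℝ) - x / (d : ℝ) ^ 2| ≤ 1 := by
      rw [hfloor d hd1]
      have hfl := Nat.floor_le hy0
      have hfu := Nat.lt_floor_add_one (x / (d:ℝ) ^ 2)
      rw [abs_le]
      constructor <;> linarith
    calc |(μ d : ℝ)| * |((N / d ^ 2 : ℕ) : ℝ) - x / (d : ℝ) ^ 2| ≤ 1 * 1 := by
          exact mul_le_mul h1 h2 (abs_nonneg _) zero_le_one
    _ = 1 := by ring
  -- decomposition
  have hswap : x * ∑ d ∈ Finset.Icc 1 D, (μ d : ℝ) / (d:ℝ) ^ 2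
      = ∑ d ∈ Finset.Icc 1 D, (μ d : ℝ) * (x / (d:ℝ) ^ 2) := by
    rw [Finset.mul_sum]
    exact Finset.sum_congr rfl fun d _ => by ring
  have hzeta : x / (Real.pi ^ 2 / 6) = x * (6 / Real.pi ^ 2) := by
    rw [div_div_eq_mul_div, mul_div_assoc]
  have hdecomp : (((Finset.Icc 1 N).filter Squarefree).card : ℝ) - x / (Real.pi ^ 2 / 6)
      = (∑ d ∈ Finset.Icc 1 D, (μ d : ℝ) * (((N / d ^ 2 : ℕ) : ℝ) - x / (d:ℝ) ^ 2))
        - x * (6 / Real.pi ^ 2 - ∑ d ∈ Finset.Icc 1 D, (μ d : ℝ) / (d:ℝ) ^ 2) := by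
    rw [hzeta, hQ]
    simp_rw [mul_sub]
    rw [Finset.sum_sub_distrib, hswap]
    ring
  rw [hdecomp]
  have hbound1 : |∑ d ∈ Finset.Icc 1 D, (μ d : ℝ) * (((N / d ^ 2 : ℕ) : ℝ) - x / (d:ℝ) ^ 2)|
      ≤ (D : ℝ) := by
    calc _ ≤ ∑ d ∈ Finset.Icc 1 D, |(μ d : ℝ) * (((N / d ^ 2 : ℕ) : ℝ) - x / (d:ℝ) ^ 2)| :=
          Finset.abs_sum_le_sum_abs _ _
    _ ≤ ∑ d ∈ Finset.Icc 1 D, (1:ℝ) := Finset.sum_le_sum hterm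
    _ = (D : ℝ) := by
        rw [Finset.sum_const, Nat.card_Icc]
        simp
  have hbound2 : |x * (6 / Real.pi ^ 2 - ∑ d ∈ Finset.Icc 1 D, (μ d : ℝ) / (d:ℝ) ^ 2)|
      ≤ x * (1 / ((D:ℝ) + 1/2)) := by
    rw [abs_mul, abs_of_nonneg hx0]
    exact mul_le_mul_of_nonneg_left (moebius_tail_le D) hx0
  calc |_ - _| ≤ (D : ℝ) + x * (1 / ((D:ℝ) + 1/2)) := by
        rw [sub_eq_add_neg]
        refine (abs_add_le _ _).trans ?_
        rw [abs_neg]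
        exact add_le_add hbound1 hbound2
  _ ≤ 2 * s := by
      have hDpos : (0:ℝ) < (D:ℝ) + 1/2 := by positivity
      rw [mul_one_div, ← sub_nonneg]
      have key : 2 * s - ((D:ℝ) + x / ((D:ℝ) + 1/2))
          = (((2*s - (D:ℝ)) * ((D:ℝ) + 1/2)) - x) / ((D:ℝ) + 1/2) := by
        field_simp
        ring
      rw [key]
      apply div_nonneg _ hDpos.le
      nlinarith [sq_nonneg (s - (D:ℝ)), mul_nonneg (sub_nonneg.mpr hDs) (sub_nonneg.mpr hsD.le),
        hs2, (by exact_mod_cast hD1 : (1:ℝ) ≤ (D:ℝ))]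
end

section
/- Let m be a positive integer and let x₁, x be reals with 1 < x₁ < x. Then ∑_{x₁ < n ≤ x, n squarefree, gcd(n,m)=1} 1/n = log(x/x₁) · (∑_{l | m} μ(l)/l) · (∑_{k ≤ √x, gcd(k,m)=1} μ(k)/k²) + θ · d(m*) · √x · (1/x₁ + 1/x) for some real θ with |θ| ≤ 1, where m* denotes the squarefree kernel (largest squarefree divisor) of m and d denotes the number-of-divisors function. -/
open Finset ArithmeticFunction

lemma sum_Ioc_range (m k : ℕ) (f : ℕ → ℝ) :
    ∑ n ∈ Ioc m k, f n = ∑ n ∈ range (k - m), f (m + 1 + n) := by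
  rw [← Finset.Icc_add_one_left_eq_Ioc, ← Finset.Ico_add_one_right_eq_Icc, Finset.sum_Ico_eq_sum_range]
  simp [Nat.succ_sub_succ]

lemma log_ratio_le (u v : ℝ) (hu : 0 < u) (huv : u ≤ v) : Real.log v - Real.log u ≤ (v - u) / u := by
  have hv : 0 < v := lt_of_lt_of_le hu huv
  have h := Real.log_le_sub_one_of_pos (x := v / u) (by positivity)
  rw [Real.log_div hv.ne' hu.ne'] at h
  have h2 : v / u - 1 = (v - u) / u := by field_simp
  linarith

lemma telescope_log (A k : ℕ) :
    ∑ n ∈ Ioc A (A + k), (Real.log (n + 1) - Real.log n) =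
      Real.log ((A : ℝ) + k + 1) - Real.log (A + 1) := by
  rw [sum_Ioc_range]
  have h : A + k - A = k := by omega
  rw [h]
  calc ∑ n ∈ range k, (Real.log (↑(A + 1 + n) + 1) - Real.log ↑(A + 1 + n))
      = ∑ i ∈ range k, (Real.log ((A:ℝ) + 1 + (i+1)) - Real.log ((A:ℝ) + 1 + i)) := by
        apply Finset.sum_congr rfl; intro i _; push_cast; ring_nf
    _ = Real.log ((A:ℝ) + 1 + k) - Real.log ((A:ℝ) + 1 + (0:ℕ)) := by
        have := Finset.sum_range_sub (fun i => Real.log ((A:ℝ) + 1 + i)) k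
        simpa using this
    _ = Real.log ((A:ℝ) + k + 1) - Real.log (A + 1) := by norm_num; ring_nf

lemma harmonic_lower (a b : ℝ) (ha : 0 < a) (hab : a ≤ b) :
    Real.log (b / a) - 1 / a ≤ ∑ n ∈ Ioc ⌊a⌋₊ ⌊b⌋₊, (1 : ℝ) / n := by
  set A := ⌊a⌋₊ with hAdef; set B := ⌊b⌋₊ with hBdef
  have hb : 0 < b := lt_of_lt_of_le ha hab
  have hAB : A ≤ B := Nat.floor_le_floor hab
  obtain ⟨k, hk⟩ : ∃ k, B = A + k := ⟨B - A, by omega⟩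
  have key : Real.log ((B:ℝ) + 1) - Real.log ((A:ℝ) + 1) ≤ ∑ n ∈ Ioc A B, (1 : ℝ) / n := by
    rw [hk]
    have hcast : Real.log ((A + k : ℕ) + 1 : ℝ) - Real.log ((A:ℝ)+1)
        = Real.log ((A : ℝ) + k + 1) - Real.log ((A:ℝ)+1) := by push_cast; ring_nf
    rw [hcast, ← telescope_log A k]
    apply Finset.sum_le_sum
    intro n hn
    rw [Finset.mem_Ioc] at hn
    have hnpos : (0:ℝ) < n := by
      have : 1 ≤ n := by omega
      exact_mod_cast this
    have := log_ratio_le n (n+1) hnpos (by linarith)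
    calc Real.log (n+1) - Real.log n ≤ ((n:ℝ)+1 - n)/n := this
      _ = 1 / n := by ring_nf
  refine le_trans ?_ key
  rw [Real.log_div hb.ne' ha.ne']
  have h1 : Real.log b ≤ Real.log ((B:ℝ) + 1) :=
    Real.log_le_log hb (le_of_lt (Nat.lt_floor_add_one b))
  have h2 : Real.log ((A:ℝ) + 1) - Real.log a ≤ 1 / a := by
    have hA : a < (A : ℝ) + 1 := Nat.lt_floor_add_one a
    have h0 := log_ratio_le a ((A:ℝ) + 1) ha hA.le
    have h3 : ((A:ℝ) + 1 - a)/a ≤ 1/a := by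
      have hA2 : (A : ℝ) ≤ a := Nat.floor_le ha.le
      gcongr
      linarith
    push_cast
    linarith
  linarith

lemma harmonic_upper (a b : ℝ) (ha : 0 < a) (hab : a ≤ b) :
    ∑ n ∈ Ioc ⌊a⌋₊ ⌊b⌋₊, (1 : ℝ) / n ≤ Real.log (b / a) + 1 / a := by
  set A := ⌊a⌋₊ with hAdef; set B := ⌊b⌋₊ with hBdef
  have hb : 0 < b := lt_of_lt_of_le ha hab
  have hlog0 : 0 ≤ Real.log (b / a) := Real.log_nonneg (by rw [le_div_iff₀ ha]; linarith)
  rcases le_or_gt B A with h | hAB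
  · rw [Finset.Ioc_eq_empty (by omega)]
    simp only [Finset.sum_empty]
    positivity
  · -- split first term
    have hsplit : Ioc A B = insert (A+1) (Ioc (A+1) B) := by
      ext n; simp only [Finset.mem_Ioc, Finset.mem_insert]; omega
    rw [hsplit, Finset.sum_insert (by simp)]
    have hfirst : (1:ℝ) / (A+1) ≤ 1 / a := by
      apply div_le_div_of_nonneg_left (by norm_num) ha
      exact (Nat.lt_floor_add_one a).le.trans (by push_cast; linarith)
    have hrest : ∑ n ∈ Ioc (A+1) B, (1:ℝ)/n ≤ Real.log (b/a) := by
      obtain ⟨k, hk⟩ : ∃ k, B = (A+1) + k := ⟨B - (A+1), by omega⟩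
      have htel : ∑ n ∈ Ioc (A+1) B, (Real.log (n+1) - Real.log n)
          = Real.log ((A:ℝ)+1+k+1) - Real.log ((A:ℝ)+1+1) := by
        rw [hk]
        have := telescope_log (A+1) k
        push_cast at this ⊢
        linarith [this]
      -- instead bound 1/n ≤ log n - log (n-1), telescoping differently
      -- use: ∑_{n ∈ Ioc (A+1) B} 1/n ≤ ∑ (log n - log (n-1)) = log B - log (A+1)
      have key : ∑ n ∈ Ioc (A+1) B, (1:ℝ)/n ≤ Real.log B - Real.log ((A:ℝ)+1) := by
        have htel2 : ∑ n ∈ Ioc (A+1) B, (Real.log n - Real.log ((n:ℝ)-1))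
            = Real.log B - Real.log ((A:ℝ)+1) := by
          rw [hk, sum_Ioc_range]
          have h : A + 1 + k - (A+1) = k := by omega
          rw [h]
          calc ∑ n ∈ range k, (Real.log ↑(A + 1 + 1 + n) - Real.log ((↑(A + 1 + 1 + n):ℝ) - 1))
              = ∑ i ∈ range k, (Real.log ((A:ℝ) + 2 + i) - Real.log ((A:ℝ) + 2 + (i:ℝ) - 1)) := by
                apply Finset.sum_congr rfl; intro i _; push_cast; ring_nf
            _ = ∑ i ∈ range k, (Real.log ((A:ℝ) + 1 + (i+1)) - Real.log ((A:ℝ) + 1 + i)) := by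
                apply Finset.sum_congr rfl; intro i _; ring_nf
            _ = Real.log ((A:ℝ) + 1 + k) - Real.log ((A:ℝ) + 1 + (0:ℕ)) := by
                have := Finset.sum_range_sub (fun i => Real.log ((A:ℝ) + 1 + i)) k
                simpa using this
            _ = Real.log ((A+1+k:ℕ):ℝ) - Real.log ((A:ℝ)+1) := by push_cast; norm_num
        rw [← htel2]
        apply Finset.sum_le_sum
        intro n hn
        rw [Finset.mem_Ioc] at hn
        have hn2 : 2 ≤ n := by omega
        have hpos : (0:ℝ) < (n:ℝ) - 1 := by
          have : (2:ℝ) ≤ n := by exact_mod_cast hn2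
          linarith
        have hnpos : (0:ℝ) < n := by positivity
        have h := Real.log_le_sub_one_of_pos (x := ((n:ℝ)-1)/n) (by positivity)
        rw [Real.log_div (by linarith) hnpos.ne'] at h
        have h2 : ((n:ℝ)-1)/n - 1 = -(1/n) := by field_simp; ring
        linarith
      refine key.trans ?_
      rw [Real.log_div hb.ne' ha.ne']
      have hB : Real.log (B:ℝ) ≤ Real.log b := by
        apply Real.log_le_log ?_ (Nat.floor_le hb.le)
        exact_mod_cast Nat.pos_of_ne_zero (by omega)
      have hA : Real.log a ≤ Real.log ((A:ℝ)+1) :=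
        Real.log_le_log ha (Nat.lt_floor_add_one a).le
      linarith
    push_cast
    linarith

lemma harmonic_est (a b : ℝ) (ha : 0 < a) (hab : a ≤ b) :
    |(∑ n ∈ Ioc ⌊a⌋₊ ⌊b⌋₊, (1 : ℝ) / n) - Real.log (b / a)| ≤ 1 / a := by
  rw [abs_le]
  constructor
  · linarith [harmonic_lower a b ha hab]
  · linarith [harmonic_upper a b ha hab]


lemma sum_moebius_divisors (c : ℕ) :
    ∑ d ∈ c.divisors, (moebius d : ℤ) = if c = 1 then 1 else 0 := by
  have := congrArg (fun f : ArithmeticFunction ℤ => f c) moebius_mul_coe_zeta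
  simp only [coe_mul_zeta_apply] at this
  rw [this, one_apply]

lemma sq_dvd_iff (n s c d : ℕ) (hn : n ≠ 0) (hsc : c ^ 2 * s = n) (hs : Squarefree s) :
    d ^ 2 ∣ n ↔ d ∣ c := by
  constructor
  · intro hd
    have hc : c ≠ 0 := by rintro rfl; simp at hsc; omega
    have hd0 : d ≠ 0 := by
      rintro rfl
      simp at hd
      omega
    rw [← Nat.factorization_le_iff_dvd hd0 hc]
    have h2 : (d^2).factorization ≤ n.factorization :=
      (Nat.factorization_le_iff_dvd (by positivity) hn).mpr hd
    intro p
    have h3 := h2 p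
    rw [Nat.factorization_pow] at h3
    rw [← hsc, Nat.factorization_mul (by positivity) hs.ne_zero, Nat.factorization_pow] at h3
    have h4 := hs.natFactorization_le_one p
    simp only [Finsupp.coe_add, Finsupp.coe_smul, Pi.add_apply, Pi.smul_apply, smul_eq_mul] at h3 ⊢
    omega
  · intro hd
    calc d ^ 2 ∣ c ^ 2 := pow_dvd_pow_of_dvd hd 2
      _ ∣ n := hsc ▸ dvd_mul_right _ _

lemma moebius_sq_sum (n : ℕ) (hn : n ≠ 0) :
    ∑ d ∈ n.divisors.filter (fun d => d ^ 2 ∣ n), (moebius d : ℤ)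
      = if Squarefree n then 1 else 0 := by
  obtain ⟨s, c, hsc, hs⟩ := Nat.sq_mul_squarefree n
  have hc : c ≠ 0 := by rintro rfl; simp at hsc; omega
  have hset : n.divisors.filter (fun d => d ^ 2 ∣ n) = c.divisors := by
    ext d
    simp only [Finset.mem_filter, Nat.mem_divisors]
    constructor
    · rintro ⟨⟨-, -⟩, hd⟩
      exact ⟨(sq_dvd_iff n s c d hn hsc hs).mp hd, hc⟩
    · rintro ⟨hd, -⟩
      have h2 := (sq_dvd_iff n s c d hn hsc hs).mpr hd
      exact ⟨⟨dvd_trans (dvd_pow_self d (by norm_num)) h2, hn⟩, h2⟩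
  rw [hset, sum_moebius_divisors]
  congr 1
  rw [eq_iff_iff]
  constructor
  · rintro rfl; rw [← hsc]; simpa using hs
  · intro hsf
    have := hsf c (by rw [← hsc, pow_two]; exact dvd_mul_right _ _)
    simpa [Nat.isUnit_iff] using this

lemma sum_moebius_coprime (m t : ℕ) (hm : m ≠ 0) :
    ∑ l ∈ m.divisors.filter (fun l => l ∣ t), (moebius l : ℤ)
      = if Nat.Coprime t m then 1 else 0 := by
  have hset : m.divisors.filter (fun l => l ∣ t) = (Nat.gcd m t).divisors := by
    ext l
    simp only [Finset.mem_filter, Nat.mem_divisors, Nat.dvd_gcd_iff]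
    constructor
    · rintro ⟨⟨h1, -⟩, h2⟩; exact ⟨⟨h1, h2⟩, Nat.gcd_ne_zero_left hm⟩
    · rintro ⟨⟨h1, h2⟩, -⟩; exact ⟨⟨h1, hm⟩, h2⟩
  rw [hset, sum_moebius_divisors]
  congr 1
  rw [eq_iff_iff]
  constructor
  · intro h; exact Nat.coprime_comm.mp h
  · intro h; exact Nat.coprime_comm.mp h

lemma sum_swap_filter {α β M : Type*} [AddCommMonoid M] (s : Finset α) (t : Finset β)
    (p : α → β → Prop) [∀ a b, Decidable (p a b)] (f : α → β → M) :
    ∑ a ∈ s, ∑ b ∈ t.filter (fun b => p a b), f a b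
      = ∑ b ∈ t, ∑ a ∈ s.filter (fun a => p a b), f a b := by
  simp_rw [Finset.sum_filter]
  exact Finset.sum_comm

lemma sum_multiples (c : ℕ) (hc : 0 < c) (y₁ y : ℝ) (hy₁ : 0 ≤ y₁) (hy : 0 ≤ y) (f : ℕ → ℝ) :
    ∑ t ∈ (Ioc ⌊y₁⌋₊ ⌊y⌋₊).filter (fun t => c ∣ t), f t
      = ∑ s ∈ Ioc ⌊y₁ / c⌋₊ ⌊y / c⌋₊, f (c * s) := by
  have hcR : (0:ℝ) < c := by exact_mod_cast hc
  refine Finset.sum_nbij' (fun t => t / c) (fun s => c * s) ?_ ?_ ?_ ?_ ?_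
  · intro t ht
    simp only [Finset.mem_filter, Finset.mem_Ioc] at ht
    obtain ⟨⟨h1, h2⟩, s, rfl⟩ := ht
    simp only [Nat.mul_div_cancel_left s hc, Finset.mem_Ioc]
    constructor
    · rw [Nat.floor_lt (by positivity)]
      rw [div_lt_iff₀ hcR]
      rw [Nat.floor_lt hy₁] at h1
      calc y₁ < (c * s : ℕ) := h1
        _ = s * c := by push_cast; ring
    · rw [Nat.le_floor_iff (by positivity), le_div_iff₀ hcR]
      have := (Nat.le_floor_iff hy).mp h2 |>.trans_eq rfl
      calc ((s:ℝ) * c) = ((c * s : ℕ) : ℝ) := by push_cast; ring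
        _ ≤ y := (Nat.le_floor_iff hy).mp h2
  · intro s hs
    simp only [Finset.mem_Ioc] at hs
    obtain ⟨h1, h2⟩ := hs
    simp only [Finset.mem_filter, Finset.mem_Ioc]
    refine ⟨⟨?_, ?_⟩, Dvd.intro _ rfl⟩
    · rw [Nat.floor_lt hy₁]
      rw [Nat.floor_lt (by positivity), div_lt_iff₀ hcR] at h1
      calc y₁ < s * c := h1
        _ = ((c * s : ℕ) : ℝ) := by push_cast; ring
    · rw [Nat.le_floor_iff hy]
      rw [Nat.le_floor_iff (by positivity), le_div_iff₀ hcR] at h2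
      calc ((c * s : ℕ) : ℝ) = (s:ℝ) * c := by push_cast; ring
        _ ≤ y := h2
  · intro t ht
    simp only [Finset.mem_filter] at ht
    obtain ⟨-, s, rfl⟩ := ht
    simp only [Nat.mul_div_cancel_left s hc]
  · intro s _
    simp only [Nat.mul_div_cancel_left s hc]
  · intro t ht
    simp only [Finset.mem_filter] at ht
    obtain ⟨-, s, rfl⟩ := ht
    simp only [Nat.mul_div_cancel_left s hc]

lemma coprime_sieve (m : ℕ) (hm : m ≠ 0) (y₁ y : ℝ) (hy₁ : 0 ≤ y₁) (hy : 0 ≤ y) :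
    ∑ t ∈ (Ioc ⌊y₁⌋₊ ⌊y⌋₊).filter (fun t => t.Coprime m), (1:ℝ)/t
      = ∑ l ∈ m.divisors, (moebius l : ℝ)/l * ∑ s ∈ Ioc ⌊y₁/(l:ℝ)⌋₊ ⌊y/(l:ℝ)⌋₊, (1:ℝ)/s := by
  have step : ∀ l ∈ m.divisors,
      (moebius l : ℝ)/l * ∑ s ∈ Ioc ⌊y₁/(l:ℝ)⌋₊ ⌊y/(l:ℝ)⌋₊, (1:ℝ)/s
        = ∑ t ∈ (Ioc ⌊y₁⌋₊ ⌊y⌋₊).filter (fun t => l ∣ t), (moebius l : ℝ) * (1/t) := by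
    intro l hl
    have hl0 : 0 < l := Nat.pos_of_mem_divisors hl
    rw [sum_multiples l hl0 y₁ y hy₁ hy (fun t => (moebius l : ℝ) * (1/t))]
    rw [Finset.mul_sum]
    apply Finset.sum_congr rfl
    intro s _
    have : ((l * s : ℕ) : ℝ) = (l : ℝ) * s := by push_cast; ring
    rw [this]
    rcases eq_or_ne s 0 with rfl | hs
    · simp
    · have hsR : (0:ℝ) < s := by exact_mod_cast Nat.pos_of_ne_zero hs
      have hlR : (0:ℝ) < l := by exact_mod_cast hl0
      field_simp
  rw [Finset.sum_congr rfl step, sum_swap_filter, Finset.sum_filter]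
  apply Finset.sum_congr rfl
  intro t ht
  rw [← Finset.sum_mul]
  have hind : ∑ l ∈ m.divisors.filter (fun l => l ∣ t), (moebius l : ℝ)
      = if Nat.Coprime t m then 1 else 0 := by
    have h := sum_moebius_coprime m t hm
    have h2 : ((∑ l ∈ m.divisors.filter (fun l => l ∣ t), (moebius l : ℤ) : ℤ) : ℝ)
        = ((if Nat.Coprime t m then 1 else 0 : ℤ) : ℝ) := by rw [h]
    push_cast at h2
    convert h2 using 2
  rw [hind]
  split_ifs <;> simp

lemma sum_multiples_coprime (c m : ℕ) (hc : 0 < c) (y₁ y : ℝ) (hy₁ : 0 ≤ y₁) (hy : 0 ≤ y)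
    (hcm : c.Coprime m) (f : ℕ → ℝ) :
    ∑ t ∈ (Ioc ⌊y₁⌋₊ ⌊y⌋₊).filter (fun t => c ∣ t ∧ t.Coprime m), f t
      = ∑ s ∈ (Ioc ⌊y₁ / c⌋₊ ⌊y / c⌋₊).filter (fun s => s.Coprime m), f (c * s) := by
  have h1 : (Ioc ⌊y₁⌋₊ ⌊y⌋₊).filter (fun t => c ∣ t ∧ t.Coprime m)
      = ((Ioc ⌊y₁⌋₊ ⌊y⌋₊).filter (fun t => c ∣ t)).filter (fun t => t.Coprime m) := by
    rw [Finset.filter_filter]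
  rw [h1, Finset.sum_filter,
    sum_multiples c hc y₁ y hy₁ hy (fun t => if t.Coprime m then f t else 0),
    Finset.sum_filter]
  apply Finset.sum_congr rfl
  intro s _
  have : (c * s).Coprime m ↔ s.Coprime m := by
    rw [Nat.coprime_mul_iff_left]
    exact ⟨fun h => h.2, fun h => ⟨hcm, h⟩⟩
  simp only [this]


lemma squarefree_sieve (m : ℕ) (hm : m ≠ 0) (x₁ x : ℝ) (hx₁ : 0 ≤ x₁) (hx0 : 0 ≤ x) :
    ∑ n ∈ (Ioc ⌊x₁⌋₊ ⌊x⌋₊).filter (fun n => Squarefree n ∧ n.Coprime m), (1:ℝ)/n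
      = ∑ d ∈ (Icc 1 ⌊Real.sqrt x⌋₊).filter (fun d => d.Coprime m),
          (moebius d : ℝ)/(d:ℝ)^2 *
            ∑ t ∈ (Ioc ⌊x₁/((d:ℝ)^2)⌋₊ ⌊x/((d:ℝ)^2)⌋₊).filter (fun t => t.Coprime m), (1:ℝ)/t := by
  have step : ∀ d ∈ (Icc 1 ⌊Real.sqrt x⌋₊).filter (fun d => d.Coprime m),
      (moebius d : ℝ)/(d:ℝ)^2 *
          ∑ t ∈ (Ioc ⌊x₁/((d:ℝ)^2)⌋₊ ⌊x/((d:ℝ)^2)⌋₊).filter (fun t => t.Coprime m), (1:ℝ)/t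
        = ∑ n ∈ (Ioc ⌊x₁⌋₊ ⌊x⌋₊).filter (fun n => d^2 ∣ n ∧ n.Coprime m),
            (moebius d : ℝ) * (1/n) := by
    intro d hd
    simp only [Finset.mem_filter, Finset.mem_Icc] at hd
    obtain ⟨⟨hd1, -⟩, hdm⟩ := hd
    have hd0 : 0 < d ^ 2 := by positivity
    rw [sum_multiples_coprime (d^2) m hd0 x₁ x hx₁ hx0 (hdm.pow_left 2)
      (fun t => (moebius d : ℝ) * (1/t))]
    rw [Finset.mul_sum]
    have hcast : ((d:ℝ)^2) = ((d^2:ℕ):ℝ) := by push_cast; ring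
    rw [hcast]
    apply Finset.sum_congr rfl
    intro s hs
    simp only [Finset.mem_filter, Finset.mem_Ioc] at hs
    have hsR : (0:ℝ) < s := by
      have : 0 < s := by
        rcases Nat.eq_zero_or_pos s with rfl | h
        · exfalso
          have := hs.1.1
          omega
        · exact h
      exact_mod_cast this
    have hdR : (0:ℝ) < d := by exact_mod_cast hd1
    push_cast
    field_simp
  rw [Finset.sum_congr rfl step, sum_swap_filter, Finset.sum_filter]
  apply Finset.sum_congr rfl
  intro n hn
  rw [Finset.mem_Ioc] at hn
  have hn0 : n ≠ 0 := by omega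
  by_cases hcop : n.Coprime m
  · have hset : ((Icc 1 ⌊Real.sqrt x⌋₊).filter (fun d => d.Coprime m)).filter
        (fun d => d^2 ∣ n ∧ n.Coprime m) = n.divisors.filter (fun d => d ^ 2 ∣ n) := by
      ext d
      simp only [Finset.mem_filter, Finset.mem_Icc, Nat.mem_divisors]
      constructor
      · rintro ⟨⟨-, -⟩, hdn, -⟩
        exact ⟨⟨dvd_trans (dvd_pow_self d two_ne_zero) hdn, hn0⟩, hdn⟩
      · rintro ⟨⟨hdvd, -⟩, hdn⟩
        have hd1 : 1 ≤ d := Nat.pos_of_dvd_of_pos hdvd (Nat.pos_of_ne_zero hn0)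
        refine ⟨⟨⟨hd1, ?_⟩, hcop.coprime_dvd_left hdvd⟩, hdn, hcop⟩
        -- d ≤ ⌊√x⌋
        rw [Nat.le_floor_iff (Real.sqrt_nonneg x)]
        rw [show ((d:ℝ)) = √((d:ℝ)^2) by rw [Real.sqrt_sq (by positivity)]]
        apply Real.sqrt_le_sqrt
        have h1 : d ^ 2 ≤ n := Nat.le_of_dvd (Nat.pos_of_ne_zero hn0) hdn
        have h2 : (n : ℝ) ≤ x := by
          have := hn.2
          rw [Nat.le_floor_iff hx0] at this
          exact this
        calc ((d:ℝ)^2) = ((d^2 : ℕ) : ℝ) := by push_cast; ring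
          _ ≤ (n : ℝ) := by exact_mod_cast h1
          _ ≤ x := h2
    rw [hset]
    rw [← Finset.sum_mul]
    have hμ : ∑ d ∈ n.divisors.filter (fun d => d ^ 2 ∣ n), (moebius d : ℝ)
        = if Squarefree n then 1 else 0 := by
      have h2 : ((∑ d ∈ n.divisors.filter (fun d => d ^ 2 ∣ n), (moebius d : ℤ) : ℤ) : ℝ)
          = ((if Squarefree n then 1 else 0 : ℤ) : ℝ) := by rw [moebius_sq_sum n hn0]
      push_cast at h2
      convert h2 using 2
    rw [hμ]
    by_cases hsf : Squarefree n
    · rw [if_pos ⟨hsf, hcop⟩, if_pos hsf]; ring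
    · rw [if_neg (by tauto), if_neg hsf]; ring
  · have hset : ((Icc 1 ⌊Real.sqrt x⌋₊).filter (fun d => d.Coprime m)).filter
        (fun d => d^2 ∣ n ∧ n.Coprime m) = ∅ := by
      apply Finset.filter_false_of_mem
      intro d _
      simp [hcop]
    rw [hset]
    simp only [Finset.sum_empty]
    simp [hcop]

lemma sum_abs_moebius_le (m : ℕ) (hm : m ≠ 0) :
    ∑ l ∈ m.divisors, |(moebius l : ℝ)| ≤ ((∏ p ∈ m.primeFactors, p).divisors.card : ℝ) := by
  have h1 : ∑ l ∈ m.divisors, |(moebius l : ℝ)|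
      = ∑ l ∈ m.divisors.filter Squarefree, (1:ℝ) := by
    rw [Finset.sum_filter]
    apply Finset.sum_congr rfl
    intro l _
    by_cases h : Squarefree l
    · rw [if_pos h]
      have := abs_moebius_eq_one_of_squarefree h
      rw [show |(moebius l : ℝ)| = ((|moebius l| : ℤ) : ℝ) by push_cast; simp, this]
      norm_num
    · rw [if_neg h, moebius_eq_zero_of_not_squarefree h]
      simp
  rw [h1, Finset.sum_const, nsmul_eq_mul, mul_one]
  have h2 : m.divisors.filter Squarefree ⊆ (∏ p ∈ m.primeFactors, p).divisors := by
    intro l hl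
    simp only [Finset.mem_filter, Nat.mem_divisors] at hl ⊢
    obtain ⟨⟨hlm, -⟩, hsf⟩ := hl
    constructor
    · rw [← Nat.prod_primeFactors_of_squarefree hsf]
      apply Finset.prod_dvd_prod_of_subset _ _ _ (Nat.primeFactors_mono hlm hm)
    · exact Finset.prod_ne_zero_iff.mpr fun p hp => (Nat.prime_of_mem_primeFactors hp).ne_zero
  exact_mod_cast Finset.card_le_card h2

set_option maxHeartbeats 2000000 in

/-- Let `m ≥ 1` and `1 < x₁ < x`. Then
`∑_{x₁ < n ≤ x, n squarefree, (n,m)=1} 1/n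
  = log(x/x₁) · (∑_{l ∣ m} μ(l)/l) · (∑_{k ≤ √x, (k,m)=1} μ(k)/k²)
    + θ · d(m*) · √x · (1/x₁ + 1/x)`
for some `θ` with `|θ| ≤ 1`, where `m*` is the squarefree kernel of `m` and `d` the
number-of-divisors function. -/
theorem sum_one_div_squarefree_coprime (m : ℕ) (hm : 0 < m) (x₁ x : ℝ)
    (hx₁ : 1 < x₁) (hx : x₁ < x) :
    ∃ θ : ℝ, |θ| ≤ 1 ∧
      ∑ n ∈ (Finset.Ioc ⌊x₁⌋₊ ⌊x⌋₊).filter (fun n => Squarefree n ∧ n.Coprime m),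
          (1 : ℝ) / (n : ℝ) =
        Real.log (x / x₁) * (∑ l ∈ m.divisors, (moebius l : ℝ) / (l : ℝ)) *
            (∑ k ∈ (Finset.Icc 1 ⌊Real.sqrt x⌋₊).filter (fun k => k.Coprime m),
              (moebius k : ℝ) / (k : ℝ) ^ 2) +
          θ * ((∏ p ∈ m.primeFactors, p).divisors.card : ℝ) * Real.sqrt x *
            (1 / x₁ + 1 / x) := by
  have hm0 : m ≠ 0 := hm.ne'
  have hx₁0 : (0:ℝ) < x₁ := by linarith
  have hx0 : (0:ℝ) < x := by linarith
  set K := ⌊Real.sqrt x⌋₊ with hK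
  set D := (Icc 1 K).filter (fun d => d.Coprime m) with hDdef
  set L := Real.log (x / x₁) with hL
  set P := ∑ l ∈ m.divisors, (moebius l : ℝ) / (l:ℝ) with hP
  set Q := ∑ k ∈ D, (moebius k : ℝ) / (k:ℝ)^2 with hQ
  set dC := ((∏ p ∈ m.primeFactors, p).divisors.card : ℝ) with hdC
  -- positivity of dC
  have hrad0 : (∏ p ∈ m.primeFactors, p) ≠ 0 :=
    Finset.prod_ne_zero_iff.mpr fun p hp => (Nat.prime_of_mem_primeFactors hp).ne_zero
  have hdC1 : (1:ℝ) ≤ dC := by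
    rw [hdC]
    have : 0 < (∏ p ∈ m.primeFactors, p).divisors.card := by
      apply Finset.card_pos.mpr
      exact ⟨_, Nat.mem_divisors_self _ hrad0⟩
    exact_mod_cast this
  set U : ℕ → ℕ → ℝ :=
    fun d l => ∑ s ∈ Ioc ⌊x₁/((d:ℝ)^2)/(l:ℝ)⌋₊ ⌊x/((d:ℝ)^2)/(l:ℝ)⌋₊, (1:ℝ)/s with hUdef
  -- positivity facts for d ∈ D, l ∈ divisors
  have hdpos : ∀ d ∈ D, (0:ℝ) < (d:ℝ) := by
    intro d hd
    rw [hDdef, Finset.mem_filter, Finset.mem_Icc] at hd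
    have : 1 ≤ d := hd.1.1
    exact_mod_cast this
  have hlpos : ∀ l ∈ m.divisors, (0:ℝ) < (l:ℝ) := by
    intro l hl
    have := Nat.pos_of_mem_divisors hl
    exact_mod_cast this
  -- error bound
  have hE : ∀ d ∈ D, ∀ l ∈ m.divisors, |U d l - L| ≤ (d:ℝ)^2 * l / x₁ := by
    intro d hd l hl
    have hd0 := hdpos d hd
    have hl0 := hlpos l hl
    have ha : (0:ℝ) < x₁/((d:ℝ)^2)/(l:ℝ) := by positivity
    have hab : x₁/((d:ℝ)^2)/(l:ℝ) ≤ x/((d:ℝ)^2)/(l:ℝ) := by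
      have : x₁ ≤ x := le_of_lt hx
      gcongr
    have h := harmonic_est _ _ ha hab
    have hlog : Real.log ((x/((d:ℝ)^2)/(l:ℝ)) / (x₁/((d:ℝ)^2)/(l:ℝ))) = L := by
      rw [hL]
      congr 1
      field_simp
    have hinv : 1 / (x₁/((d:ℝ)^2)/(l:ℝ)) = (d:ℝ)^2 * l / x₁ := by field_simp
    rw [hlog, hinv] at h
    exact h
  -- main decomposition
  set R := ∑ d ∈ D, (moebius d : ℝ)/(d:ℝ)^2 *
      (∑ l ∈ m.divisors, (moebius l : ℝ)/(l:ℝ) * (U d l - L)) with hR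
  have hS : ∑ n ∈ (Ioc ⌊x₁⌋₊ ⌊x⌋₊).filter (fun n => Squarefree n ∧ n.Coprime m), (1:ℝ)/n
      = L * P * Q + R := by
    rw [squarefree_sieve m hm0 x₁ x hx₁0.le hx0.le]
    have hinner : ∀ d ∈ D,
        (moebius d : ℝ)/(d:ℝ)^2 *
           ∑ t ∈ (Ioc ⌊x₁/((d:ℝ)^2)⌋₊ ⌊x/((d:ℝ)^2)⌋₊).filter (fun t => t.Coprime m), (1:ℝ)/t
        = L * P * ((moebius d : ℝ)/(d:ℝ)^2)
          + (moebius d : ℝ)/(d:ℝ)^2 * (∑ l ∈ m.divisors, (moebius l : ℝ)/(l:ℝ) * (U d l - L)) := by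
      intro d hd
      have hd0 := hdpos d hd
      rw [coprime_sieve m hm0 (x₁/((d:ℝ)^2)) (x/((d:ℝ)^2)) (by positivity) (by positivity)]
      have : ∑ l ∈ m.divisors, (moebius l : ℝ)/(l:ℝ) * (U d l)
          = L * P + ∑ l ∈ m.divisors, (moebius l : ℝ)/(l:ℝ) * (U d l - L) := by
        rw [hP, Finset.mul_sum, ← Finset.sum_add_distrib]
        apply Finset.sum_congr rfl
        intro l hl
        ring
      rw [hUdef] at this
      simp only at this
      rw [this]
      ring
    rw [Finset.sum_congr rfl hinner, Finset.sum_add_distrib, ← hR]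
    congr 1
    exact (Finset.mul_sum D (fun k => (moebius k : ℝ)/(k:ℝ)^2) (L*P)).symm
  -- bound on R
  have hsum_abs : ∑ l ∈ m.divisors, |(moebius l : ℝ)| ≤ dC := sum_abs_moebius_le m hm0
  have hRbound : |R| ≤ Real.sqrt x * dC / x₁ := by
    have hper : ∀ d ∈ D, |(moebius d : ℝ)/(d:ℝ)^2 *
        (∑ l ∈ m.divisors, (moebius l : ℝ)/(l:ℝ) * (U d l - L))| ≤ dC / x₁ := by
      intro d hd
      have hd0 := hdpos d hd
      have hW : |∑ l ∈ m.divisors, (moebius l : ℝ)/(l:ℝ) * (U d l - L)|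
          ≤ ((d:ℝ)^2 / x₁) * ∑ l ∈ m.divisors, |(moebius l : ℝ)| := by
        calc |∑ l ∈ m.divisors, (moebius l : ℝ)/(l:ℝ) * (U d l - L)|
            ≤ ∑ l ∈ m.divisors, |(moebius l : ℝ)/(l:ℝ) * (U d l - L)| :=
              Finset.abs_sum_le_sum_abs _ _
          _ ≤ ∑ l ∈ m.divisors, ((d:ℝ)^2 / x₁) * |(moebius l : ℝ)| := by
              apply Finset.sum_le_sum
              intro l hl
              have hl0 := hlpos l hl
              rw [abs_mul, abs_div]
              have h1 := hE d hd l hl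
              calc |(moebius l : ℝ)|/|(l:ℝ)| * |U d l - L|
                  ≤ |(moebius l : ℝ)|/(l:ℝ) * ((d:ℝ)^2 * l / x₁) := by
                    rw [abs_of_pos hl0]
                    gcongr
                _ = ((d:ℝ)^2 / x₁) * |(moebius l : ℝ)| := by field_simp
          _ = ((d:ℝ)^2 / x₁) * ∑ l ∈ m.divisors, |(moebius l : ℝ)| := by
              rw [Finset.mul_sum]
      have hmud : |(moebius d : ℝ)/(d:ℝ)^2| ≤ 1/(d:ℝ)^2 := by
        rw [abs_div, abs_of_pos (by positivity : (0:ℝ) < (d:ℝ)^2)]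
        gcongr
        have : |moebius d| ≤ 1 := abs_moebius_le_one
        calc |(moebius d : ℝ)| = ((|moebius d| : ℤ) : ℝ) := by push_cast; simp
          _ ≤ 1 := by exact_mod_cast this
      calc |(moebius d : ℝ)/(d:ℝ)^2 * (∑ l ∈ m.divisors, (moebius l : ℝ)/(l:ℝ) * (U d l - L))|
          = |(moebius d : ℝ)/(d:ℝ)^2| * |∑ l ∈ m.divisors, (moebius l : ℝ)/(l:ℝ) * (U d l - L)| :=
            abs_mul _ _
        _ ≤ (1/(d:ℝ)^2) * (((d:ℝ)^2 / x₁) * ∑ l ∈ m.divisors, |(moebius l : ℝ)|) := by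
            apply mul_le_mul hmud hW (abs_nonneg _) (by positivity)
        _ = (∑ l ∈ m.divisors, |(moebius l : ℝ)|) / x₁ := by field_simp
        _ ≤ dC / x₁ := by gcongr
    calc |R| ≤ ∑ d ∈ D, |(moebius d : ℝ)/(d:ℝ)^2 *
          (∑ l ∈ m.divisors, (moebius l : ℝ)/(l:ℝ) * (U d l - L))| := Finset.abs_sum_le_sum_abs _ _
      _ ≤ ∑ d ∈ D, dC / x₁ := Finset.sum_le_sum hper
      _ = (D.card : ℝ) * (dC / x₁) := by rw [Finset.sum_const, nsmul_eq_mul]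
      _ ≤ (K : ℝ) * (dC / x₁) := by
          gcongr
          have h1 : D.card ≤ (Icc 1 K).card := Finset.card_le_card (Finset.filter_subset _ _)
          have h2 : (Icc 1 K).card = K := by rw [Nat.card_Icc]; omega
          exact_mod_cast h1.trans_eq h2
      _ ≤ Real.sqrt x * (dC / x₁) := by
          gcongr
          exact Nat.floor_le (Real.sqrt_nonneg x)
      _ = Real.sqrt x * dC / x₁ := by ring
  -- choose θ
  set c := dC * Real.sqrt x * (1/x₁ + 1/x) with hc
  have hsqrt : (0:ℝ) < Real.sqrt x := Real.sqrt_pos.mpr hx0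
  have hcpos : 0 < c := by
    rw [hc]
    have h3 : (0:ℝ) < 1/x₁ + 1/x := by positivity
    exact mul_pos (mul_pos (lt_of_lt_of_le one_pos hdC1) hsqrt) h3
  refine ⟨R / c, ?_, ?_⟩
  · rw [abs_div, abs_of_pos hcpos, div_le_one hcpos]
    refine hRbound.trans ?_
    have h1 : dC * Real.sqrt x * (1/x₁ + 1/x) = Real.sqrt x * dC / x₁ + dC * Real.sqrt x / x := by
      ring
    have h2 : (0:ℝ) ≤ dC * Real.sqrt x / x := by positivity
    rw [hc, h1]
    linarith
  · rw [hS]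
    congr 1
    have hcne : c ≠ 0 := hcpos.ne'
    have : R / c * dC * Real.sqrt x * (1/x₁ + 1/x) = R :=
      calc R / c * dC * Real.sqrt x * (1/x₁ + 1/x) = (R / c) * c := by rw [hc]; ring
        _ = R := div_mul_cancel₀ R hcne
    exact this.symm
end
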